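/- With d_k(u,v,n) as above, the recurrence d_{(2k+3)_{a²}}(u,v,n) = d_{(2k+2)_a}(u,v,n) + d_{(2k)_a}(u−2, v, n−2k−3) + d_{(2k−1)_a}(u−2, v−1, n−4k−3) holds for all u,v ∈ ℕ and k,n ≥ 1. -/
import Mathlib


/-- The five colours a, b, ab, a², b². -/
inductive Col where
  | a | b | ab | aa | bb
deriving DecidableEq, Inhabited

open Col

/-- Position of a coloured integer in the ordering
1_{ab} < 1_a < 1_{b²} < 1_b < 2_{ab} < 2_a < 3_{a²} < 2_b < 3_{ab} < ⋯ . -/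
def colPos : ℕ × Col → ℕ
  | (k, Col.ab) => 4 * k - 4
  | (k, Col.a)  => 4 * k - 3
  | (k, Col.bb) => 4 * k - 2
  | (k, Col.b)  => 4 * k - 1
  | (k, Col.aa) => 4 * k - 6

/-- Entry of the matrix A: minimal gap below a part of size `k` and colour `x`,
above a part of colour `y`. -/
def colMinGap (k : ℕ) (x y : Col) : ℕ :=
  match x, y with
  | Col.a, y => if k % 2 = 1 then
      (match y with | Col.ab => 1 | _ => 2)
    else
      (match y with | Col.aa => 3 | Col.bb => 3 | _ => 2)
  | Col.bb, y => (match y with | Col.b => 3 | Col.bb => 4 | _ => 2)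
  | Col.b, y => if k % 2 = 1 then
      (match y with | Col.a => 1 | Col.ab => 1 | _ => 2)
    else
      (match y with | Col.a => 1 | Col.ab => 1 | Col.aa => 1 | Col.bb => 3 | _ => 2)
  | Col.ab, y => if k % 2 = 0 then
      (match y with | Col.aa => 3 | Col.bb => 3 | _ => 2)
    else
      (match y with | Col.b => 3 | Col.bb => 3 | _ => 2)
  | Col.aa, y => (match y with | Col.aa => 4 | Col.bb => 4 | _ => 3)

/-- A coloured partition as in the non-dilated Siladić theorem: parts are coloured
positive integers, squared colours only occur on odd integers, there is no part
1_{ab} or 1_{b²}, and consecutive parts satisfy the gap conditions of matrix A. -/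
def IsColPartition (l : List (ℕ × Col)) : Prop :=
  (∀ p ∈ l, 1 ≤ p.1 ∧ ((p.2 = Col.aa ∨ p.2 = Col.bb) → p.1 % 2 = 1) ∧
    p ≠ (1, Col.ab) ∧ p ≠ (1, Col.bb)) ∧
  ∀ i, i + 1 < l.length →
    l[i]!.1 ≥ l[i+1]!.1 + colMinGap l[i]!.1 l[i]!.2 l[i+1]!.2

/-- Number of parts coloured a or ab, plus twice the number of parts coloured a². -/
def aCt (l : List (ℕ × Col)) : ℕ :=
  (l.countP fun p => p.2 == Col.a || p.2 == Col.ab) +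
    2 * (l.countP fun p => p.2 == Col.aa)

/-- Number of parts coloured b or ab, plus twice the number of parts coloured b². -/
def bCt (l : List (ℕ × Col)) : ℕ :=
  (l.countP fun p => p.2 == Col.b || p.2 == Col.ab) +
    2 * (l.countP fun p => p.2 == Col.bb)

/-- D(u,v,n): coloured partitions of n with a-count u and b-count v. -/
noncomputable def Dct (u v n : ℕ) : ℕ :=
  Nat.card {l : List (ℕ × Col) // IsColPartition l ∧
    (l.map Prod.fst).sum = n ∧ aCt l = u ∧ bCt l = v}

/-- d_K(u,v,n): as D(u,v,n) but with largest part at most K in the coloured order;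
integer arguments (negative values give 0). -/
noncomputable def dct (K : ℕ × Col) (u v n : ℤ) : ℕ :=
  Nat.card {l : List (ℕ × Col) // IsColPartition l ∧
    (∀ p ∈ l, colPos p ≤ colPos K) ∧
    ((l.map Prod.fst).sum : ℤ) = n ∧ (aCt l : ℤ) = u ∧ (bCt l : ℤ) = v}

/-- e_K(u,v,n): as d_K(u,v,n) but with largest part exactly K. -/
noncomputable def ect (K : ℕ × Col) (u v n : ℤ) : ℕ :=
  Nat.card {l : List (ℕ × Col) // IsColPartition l ∧
    (∀ p ∈ l, colPos p ≤ colPos K) ∧ l ≠ [] ∧ l.head! = K ∧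
    ((l.map Prod.fst).sum : ℤ) = n ∧ (aCt l : ℤ) = u ∧ (bCt l : ℤ) = v}

/-- The generating function G_K(a,b,q) = 1 + ∑_{u,v≥0,n≥1} d_K(u,v,n) aᵘbᵛqⁿ,
as a formal power series in the variables a = X 0, b = X 1, q = X 2. -/
noncomputable def Gf (K : ℕ × Col) : MvPowerSeries (Fin 3) ℚ :=
  fun e => (dct K (e 0) (e 1) (e 2) : ℚ)


instance : Fintype Col :=
  ⟨{Col.a, Col.b, Col.ab, Col.aa, Col.bb}, fun x => by cases x <;> simp⟩
theorem colMinGap_pos (k : ℕ) (x y : Col) : 1 ≤ colMinGap k x y := by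
  unfold colMinGap
  rcases Nat.mod_two_eq_zero_or_one k with h | h <;>
    cases x <;> cases y <;> rw [h] <;> decide
theorem isCol_nil : IsColPartition [] := ⟨by simp, by simp⟩

theorem isCol_cons {h : ℕ × Col} {t : List (ℕ × Col)} :
    IsColPartition (h :: t) ↔
      (1 ≤ h.1 ∧ ((h.2 = Col.aa ∨ h.2 = Col.bb) → h.1 % 2 = 1) ∧
        h ≠ (1, Col.ab) ∧ h ≠ (1, Col.bb)) ∧
      IsColPartition t ∧
      ∀ q ∈ t.head?, q.1 + colMinGap h.1 h.2 q.2 ≤ h.1 := by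
  constructor
  · rintro ⟨h1, h2⟩
    refine ⟨h1 _ (by simp), ⟨fun p hp => h1 p (by simp [hp]), fun i hi => ?_⟩, ?_⟩
    · have := h2 (i+1) (by simpa using hi)
      simpa using this
    · cases t with
      | nil => simp
      | cons q t' =>
        intro q' hq'
        simp only [List.head?_cons, Option.mem_def, Option.some.injEq] at hq'
        subst hq'
        have := h2 0 (by simp)
        simpa using this
  · rintro ⟨hh, ⟨h1, h2⟩, hgap⟩
    refine ⟨?_, ?_⟩
    · intro p hp
      rcases List.mem_cons.1 hp with rfl | hp
      · exact hh
      · exact h1 p hp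
    · intro i hi
      cases i with
      | zero =>
        cases t with
        | nil => simp at hi
        | cons q t' => simpa using hgap q rfl
      | succ j =>
        have := h2 j (by simpa using hi)
        simpa using this

theorem isCol_tail_lt : ∀ {t : List (ℕ × Col)} {h : ℕ × Col},
    IsColPartition (h :: t) → ∀ p ∈ t, p.1 < h.1 := by
  intro t
  induction t with
  | nil => intro h _ p hp; simp at hp
  | cons q t' ih =>
    intro h hcp p hp
    rw [isCol_cons] at hcp
    obtain ⟨_, hq, hgap⟩ := hcp
    have h1 : q.1 + colMinGap h.1 h.2 q.2 ≤ h.1 := hgap q rfl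
    have h2 : 1 ≤ colMinGap h.1 h.2 q.2 := colMinGap_pos _ _ _
    rcases List.mem_cons.1 hp with rfl | hp'
    · omega
    · exact lt_trans (ih hq p hp') (by omega)

theorem aCt_cons_aa (m : ℕ) (t : List (ℕ × Col)) : aCt ((m, Col.aa) :: t) = aCt t + 2 := by
  simp [aCt, List.countP_cons]; ring

theorem bCt_cons_aa (m : ℕ) (t : List (ℕ × Col)) : bCt ((m, Col.aa) :: t) = bCt t := by
  simp [bCt, List.countP_cons]

theorem aCt_cons_b (m : ℕ) (t : List (ℕ × Col)) : aCt ((m, Col.b) :: t) = aCt t := by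
  simp [aCt, List.countP_cons]

theorem bCt_cons_b (m : ℕ) (t : List (ℕ × Col)) : bCt ((m, Col.b) :: t) = bCt t + 1 := by
  simp [bCt, List.countP_cons]; ring
def DSet (K : ℕ × Col) (u v n : ℤ) : Set (List (ℕ × Col)) :=
  {l | IsColPartition l ∧ (∀ p ∈ l, colPos p ≤ colPos K) ∧
    ((l.map Prod.fst).sum : ℤ) = n ∧ (aCt l : ℤ) = u ∧ (bCt l : ℤ) = v}

theorem dct_eq_ncard (K : ℕ × Col) (u v n : ℤ) :
    dct K u v n = (DSet K u v n).ncard := by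
  rw [← Nat.card_coe_set_eq]; rfl

theorem length_le_sum {l : List (ℕ × Col)} (hp : ∀ p ∈ l, 1 ≤ p.1) :
    l.length ≤ (l.map Prod.fst).sum := by
  induction l with
  | nil => simp
  | cons q t ih =>
    simp only [List.map_cons, List.sum_cons, List.length_cons]
    have h1 := hp q (by simp)
    have h2 := ih (fun p hp' => hp p (by simp [hp']))
    omega

theorem part_le_sum {l : List (ℕ × Col)} {p : ℕ × Col} (hp : p ∈ l) :
    p.1 ≤ (l.map Prod.fst).sum := by
  induction l with
  | nil => simp at hp
  | cons q t ih =>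
    simp only [List.map_cons, List.sum_cons]
    rcases List.mem_cons.1 hp with rfl | h
    · omega
    · have := ih h; omega

theorem dset_finite (K : ℕ × Col) (u v n : ℤ) : (DSet K u v n).Finite := by
  set m := n.toNat with hm
  apply Set.Finite.subset
    (Set.Finite.image (List.map (fun q : Fin (m+1) × Col => (q.1.1, q.2)))
      (List.finite_length_le (Fin (m+1) × Col) m))
  rintro l ⟨hcp, -, hsum, -, -⟩
  have hone : ∀ p ∈ l, 1 ≤ p.1 := fun p hp => (hcp.1 p hp).1
  have hsum' : (l.map Prod.fst).sum = m := by omega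
  have hlen : l.length ≤ m := hsum' ▸ length_le_sum hone
  have hpart : ∀ p ∈ l, p.1 ≤ m := fun p hp => hsum' ▸ part_le_sum hp
  refine ⟨l.attach.map (fun x => ((⟨x.1.1, Nat.lt_succ_of_le (hpart x.1 x.2)⟩ : Fin (m+1)), x.1.2)), ?_, ?_⟩
  · simpa using hlen
  · rw [List.map_map]
    have heq : ((fun q : Fin (m+1) × Col => (q.1.1, q.2)) ∘
        (fun x : {p // p ∈ l} => ((⟨x.1.1, Nat.lt_succ_of_le (hpart x.1 x.2)⟩ : Fin (m+1)), x.1.2)))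
        = fun x => x.1 := by
      funext x; rfl
    rw [heq]
    exact List.attach_map_subtype_val l
theorem cg_aa (m : ℕ) (c : Col) :
    colMinGap m Col.aa c = if c = Col.aa ∨ c = Col.bb then 4 else 3 := by
  cases c <;> rfl

theorem cg_b_even (m : ℕ) (hm : m % 2 = 0) (c : Col) :
    colMinGap m Col.b c =
      if c = Col.bb then 3 else if c = Col.b then 2 else 1 := by
  cases c
  · rw [show colMinGap m Col.b Col.a = if m % 2 = 1 then 1 else 1 from rfl]
    simp
  · rw [show colMinGap m Col.b Col.b = if m % 2 = 1 then 2 else 2 from rfl]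
    simp
  · rw [show colMinGap m Col.b Col.ab = if m % 2 = 1 then 1 else 1 from rfl]
    simp
  · rw [show colMinGap m Col.b Col.aa = if m % 2 = 1 then 2 else 1 from rfl,
      if_neg (by omega)]
    simp
  · rw [show colMinGap m Col.b Col.bb = if m % 2 = 1 then 2 else 3 from rfl,
      if_neg (by omega)]
    simp

-- size bound below (2k+3)_{a²}
theorem Psz {k m : ℕ} {c : Col} (h1 : 1 ≤ m)
    (hb : colPos (m, c) ≤ colPos (2*k+3, Col.aa)) : m ≤ 2*k+3 := by
  cases c <;> simp_all [colPos] <;> omega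

-- drop from (2k+3)_{a²} to (2k+2)_a
theorem posA {k m : ℕ} {c : Col} (h1 : 1 ≤ m) (h2 : (c = Col.aa ∨ c = Col.bb) → m % 2 = 1)
    (hb : colPos (m, c) ≤ colPos (2*k+3, Col.aa)) (hne : (m, c) ≠ (2*k+3, Col.aa)) :
    colPos (m, c) ≤ colPos (2*k+2, Col.a) := by
  cases c <;> simp_all [colPos, Prod.mk.injEq] <;> omega

-- gap below (2k+3)_{a²} given bound (2k)_a   (for B'' → S)
theorem gapB {k m : ℕ} {c : Col} (hk : 1 ≤ k) (h1 : 1 ≤ m) (h2 : (c = Col.aa ∨ c = Col.bb) → m % 2 = 1)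
    (hb : colPos (m, c) ≤ colPos (2*k, Col.a)) :
    m + colMinGap (2*k+3) Col.aa c ≤ 2*k+3 := by
  rw [cg_aa]
  cases c <;> simp_all [colPos] <;> omega

-- gap below (2k)_b given bound (2k-1)_a   (for C'' → S)
theorem gapC {k m : ℕ} {c : Col} (hk : 1 ≤ k) (h1 : 1 ≤ m)
    (h2 : (c = Col.aa ∨ c = Col.bb) → m % 2 = 1)
    (hb : colPos (m, c) ≤ colPos (2*k-1, Col.a)) :
    m + colMinGap (2*k) Col.b c ≤ 2*k := by
  rw [cg_b_even _ (by omega)]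
  cases c <;> simp_all [colPos] <;> omega

-- bound (2k)_a from gap below (2k+3)_{a²}   (for S → B)
theorem posB {k m : ℕ} {c : Col} (h1 : 1 ≤ m) (h2 : (c = Col.aa ∨ c = Col.bb) → m % 2 = 1)
    (hg : m + colMinGap (2*k+3) Col.aa c ≤ 2*k+3) (hne : (m, c) ≠ (2*k, Col.b)) (hk : 1 ≤ k) :
    colPos (m, c) ≤ colPos (2*k, Col.a) ∧ m ≤ 2*k := by
  rw [cg_aa] at hg
  cases c <;> simp_all [colPos, Prod.mk.injEq] <;> omega

theorem posBsz {k m : ℕ} {c : Col} (hsz : m ≤ 2*k-1) (hk : 1 ≤ k) :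
    colPos (m, c) ≤ colPos (2*k, Col.a) := by
  cases c <;> simp_all [colPos] <;> omega

-- bound (2k-1)_a from gap below (2k)_b   (for S → C)
theorem posC {k m : ℕ} {c : Col} (h1 : 1 ≤ m) (h2 : (c = Col.aa ∨ c = Col.bb) → m % 2 = 1)
    (hg : m + colMinGap (2*k) Col.b c ≤ 2*k) (hk : 1 ≤ k) :
    colPos (m, c) ≤ colPos (2*k-1, Col.a) ∧ m ≤ 2*k-1 := by
  rw [cg_b_even _ (by omega)] at hg
  cases c <;> simp_all [colPos] <;> omega

theorem posCsz {k m : ℕ} {c : Col} (hsz : m ≤ 2*k-2) (hk : 1 ≤ k) :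
    colPos (m, c) ≤ colPos (2*k-1, Col.a) := by
  cases c <;> simp_all [colPos] <;> omega
theorem dset_decomp (u v k n : ℕ) (hk : 1 ≤ k) :
    DSet (2*k+3, Col.aa) (u:ℤ) (v:ℤ) (n:ℤ) =
      (DSet (2*k+2, Col.a) (u:ℤ) (v:ℤ) (n:ℤ) ∪
        (List.cons ((2*k+3 : ℕ), Col.aa)) ''
          DSet (2*k, Col.a) ((u:ℤ)-2) (v:ℤ) ((n:ℤ)-(2*(k:ℤ)+3))) ∪
      (fun t => ((2*k+3 : ℕ), Col.aa) :: ((2*k : ℕ), Col.b) :: t) ''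
        DSet (2*k-1, Col.a) ((u:ℤ)-2) ((v:ℤ)-1) ((n:ℤ)-(4*(k:ℤ)+3)) := by
  ext l
  simp only [DSet, Set.mem_union, Set.mem_image, Set.mem_setOf_eq]
  constructor
  · rintro ⟨hcp, hbd, hsum, ha, hb⟩
    rcases l with _ | ⟨⟨m, c⟩, t⟩
    · exact Or.inl (Or.inl ⟨hcp, by simp, hsum, ha, hb⟩)
    · by_cases hhd : ((m, c) : ℕ × Col) = (2*k+3, Col.aa)
      · obtain ⟨rfl, rfl⟩ : m = 2*k+3 ∧ c = Col.aa := by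
          simpa [Prod.ext_iff] using hhd
        rw [isCol_cons] at hcp
        obtain ⟨hok, hcpt, hgap⟩ := hcp
        simp only [List.map_cons, List.sum_cons] at hsum
        rw [aCt_cons_aa] at ha
        rw [bCt_cons_aa] at hb
        push_cast at hsum ha
        have hsum' : ((t.map Prod.fst).sum : ℤ) = (n:ℤ) - (2*(k:ℤ)+3) := by push_cast; omega
        have ha' : (aCt t : ℤ) = (u:ℤ) - 2 := by omega
        have hb' : (bCt t : ℤ) = (v:ℤ) := hb
        rcases t with _ | ⟨⟨m2, c2⟩, t'⟩
        · exact Or.inl (Or.inr ⟨[], ⟨isCol_nil, by simp, by simpa using hsum',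
            by simpa using ha', by simpa using hb'⟩, rfl⟩)
        · have hq : m2 + colMinGap (2*k+3) Col.aa c2 ≤ 2*k+3 := hgap (m2, c2) rfl
          have hval2 := hcpt.1 (m2, c2) (by simp)
          by_cases hq2 : ((m2, c2) : ℕ × Col) = (2*k, Col.b)
          · obtain ⟨rfl, rfl⟩ : m2 = 2*k ∧ c2 = Col.b := by
              simpa [Prod.ext_iff] using hq2
            right
            rw [isCol_cons] at hcpt
            obtain ⟨hok2, hcpt', hgap'⟩ := hcpt
            refine ⟨t', ⟨hcpt', ?_, ?_, ?_, ?_⟩, rfl⟩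
            · intro p hp
              rcases t' with _ | ⟨q', t''⟩
              · simp at hp
              · have hvq' := hcpt'.1 q' (by simp)
                have hgq' : q'.1 + colMinGap (2*k) Col.b q'.2 ≤ 2*k := hgap' q' rfl
                have hposq' := posC (m := q'.1) (c := q'.2) hvq'.1 hvq'.2.1 hgq' hk
                rcases List.mem_cons.1 hp with rfl | hp'
                · exact hposq'.1
                · have hlt : p.1 < q'.1 := isCol_tail_lt hcpt' p hp'
                  have h2 := hposq'.2
                  exact posCsz (m := p.1) (c := p.2) (by omega) hk
            · simp only [List.map_cons, List.sum_cons] at hsum'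
              push_cast at hsum' ⊢
              omega
            · rw [aCt_cons_b] at ha'; exact ha'
            · rw [bCt_cons_b] at hb'; push_cast at hb' ⊢; omega
          · left; right
            refine ⟨(m2, c2) :: t', ⟨hcpt, ?_, hsum', ha', hb'⟩, rfl⟩
            intro p hp
            have hposq := posB hval2.1 hval2.2.1 hq hq2 hk
            rcases List.mem_cons.1 hp with rfl | hp'
            · exact hposq.1
            · have hlt : p.1 < m2 := isCol_tail_lt hcpt p hp'
              have h2 := hposq.2
              exact posBsz (m := p.1) (c := p.2) (by omega) hk
      · left; left
        refine ⟨hcp, ?_, hsum, ha, hb⟩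
        intro p hp
        have hval := hcp.1 p hp
        have hhead := hcp.1 (m, c) (by simp)
        have hmle : m ≤ 2*k+3 := Psz hhead.1 (hbd (m, c) (by simp))
        have hne : p ≠ (2*k+3, Col.aa) := by
          rcases List.mem_cons.1 hp with rfl | hp'
          · exact hhd
          · have hlt : p.1 < m := isCol_tail_lt hcp p hp'
            intro he
            have : p.1 = 2*k+3 := by rw [he]
            omega
        exact posA (m := p.1) (c := p.2) hval.1 hval.2.1 (hbd p hp) hne
  · rintro ((⟨hcp, hbd, hsum, ha, hb⟩ | ⟨t, ⟨hcp, hbd, hsum, ha, hb⟩, rfl⟩) |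
      ⟨t, ⟨hcp, hbd, hsum, ha, hb⟩, rfl⟩)
    · refine ⟨hcp, fun p hp => le_trans (hbd p hp) ?_, hsum, ha, hb⟩
      show 4*(2*k+2)-3 ≤ 4*(2*k+3)-6
      omega
    · refine ⟨?_, ?_, ?_, ?_, ?_⟩
      · rw [isCol_cons]
        refine ⟨⟨by show 1 ≤ 2*k+3; omega, fun _ => by show (2*k+3) % 2 = 1; omega,
          by simp, by simp⟩, hcp, ?_⟩
        intro q hq
        have hq' : q ∈ t := List.mem_of_mem_head? hq
        have hval := hcp.1 q hq'
        exact gapB hk hval.1 hval.2.1 (hbd q hq')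
      · intro p hp
        rcases List.mem_cons.1 hp with rfl | hp'
        · exact le_refl _
        · refine le_trans (hbd p hp') ?_
          show 4*(2*k)-3 ≤ 4*(2*k+3)-6
          omega
      · simp only [List.map_cons, List.sum_cons]
        push_cast
        push_cast at hsum
        omega
      · rw [aCt_cons_aa]; push_cast; push_cast at ha; omega
      · rw [bCt_cons_aa]; exact hb
    · refine ⟨?_, ?_, ?_, ?_, ?_⟩
      · rw [isCol_cons]
        refine ⟨⟨by show 1 ≤ 2*k+3; omega, fun _ => by show (2*k+3) % 2 = 1; omega,
          by simp, by simp⟩, ?_, ?_⟩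
        · rw [isCol_cons]
          refine ⟨⟨by show 1 ≤ 2*k; omega, by simp, by simp,
            by simp⟩, hcp, ?_⟩
          intro q hq
          have hq' : q ∈ t := List.mem_of_mem_head? hq
          have hval := hcp.1 q hq'
          exact gapC hk hval.1 hval.2.1 (hbd q hq')
        · intro q hq
          simp only [List.head?_cons, Option.mem_def, Option.some.injEq] at hq
          subst hq
          show 2*k + colMinGap (2*k+3) Col.aa Col.b ≤ 2*k+3
          rw [cg_aa]
          simp
      · intro p hp
        rcases List.mem_cons.1 hp with rfl | hp'
        · exact le_refl _
        · rcases List.mem_cons.1 hp' with rfl | hp''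
          · show 4*(2*k)-1 ≤ 4*(2*k+3)-6
            omega
          · refine le_trans (hbd p hp'') ?_
            show 4*(2*k-1)-3 ≤ 4*(2*k+3)-6
            omega
      · simp only [List.map_cons, List.sum_cons]
        push_cast
        push_cast at hsum
        omega
      · rw [aCt_cons_aa, aCt_cons_b]; push_cast; push_cast at ha; omega
      · rw [bCt_cons_aa, bCt_cons_b]; push_cast; push_cast at hb; omega

/-- Recurrence (3.7): d_{(2k+3)_{a²}}(u,v,n) = d_{(2k+2)_a}(u,v,n)
+ d_{(2k)_a}(u-2,v,n-2k-3) + d_{(2k-1)_a}(u-2,v-1,n-4k-3). -/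
theorem recurrence_eqd7 (u v k n : ℕ) (hk : 1 ≤ k) (hn : 1 ≤ n) :
    dct (2*k+3, Col.aa) u v n =
      dct (2*k+2, Col.a) u v n +
      dct (2*k, Col.a) ((u : ℤ) - 2) (v : ℤ) ((n : ℤ) - (2*k+3)) +
      dct (2*k-1, Col.a) ((u : ℤ) - 2) ((v : ℤ) - 1) ((n : ℤ) - (4*k+3)) := by
  have hinj1 : Function.Injective (List.cons ((2*k+3 : ℕ), Col.aa)) :=
    fun s t h => by simpa using h
  have hinj2 : Function.Injective
      (fun t : List (ℕ × Col) => ((2*k+3 : ℕ), Col.aa) :: ((2*k : ℕ), Col.b) :: t) :=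
    fun s t h => by simpa using h
  have finA := dset_finite (2*k+2, Col.a) (u:ℤ) (v:ℤ) (n:ℤ)
  have finB := dset_finite (2*k, Col.a) ((u:ℤ)-2) (v:ℤ) ((n:ℤ)-(2*(k:ℤ)+3))
  have finC := dset_finite (2*k-1, Col.a) ((u:ℤ)-2) ((v:ℤ)-1) ((n:ℤ)-(4*(k:ℤ)+3))
  have hd1 : Disjoint (DSet (2*k+2, Col.a) (u:ℤ) (v:ℤ) (n:ℤ))
      ((List.cons ((2*k+3 : ℕ), Col.aa)) ''
        DSet (2*k, Col.a) ((u:ℤ)-2) (v:ℤ) ((n:ℤ)-(2*(k:ℤ)+3))) := by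
    rw [Set.disjoint_left]
    rintro l ⟨-, hbd, -⟩ ⟨t, -, rfl⟩
    have h := hbd ((2*k+3 : ℕ), Col.aa) (by simp)
    revert h
    show ¬(4*(2*k+3)-6 ≤ 4*(2*k+2)-3)
    omega
  have hd2 : Disjoint
      (DSet (2*k+2, Col.a) (u:ℤ) (v:ℤ) (n:ℤ) ∪
        (List.cons ((2*k+3 : ℕ), Col.aa)) ''
          DSet (2*k, Col.a) ((u:ℤ)-2) (v:ℤ) ((n:ℤ)-(2*(k:ℤ)+3)))
      ((fun t => ((2*k+3 : ℕ), Col.aa) :: ((2*k : ℕ), Col.b) :: t) ''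
        DSet (2*k-1, Col.a) ((u:ℤ)-2) ((v:ℤ)-1) ((n:ℤ)-(4*(k:ℤ)+3))) := by
    rw [Set.disjoint_left]
    rintro l hl ⟨t', hC, rfl⟩
    rcases hl with ⟨-, hbd, -⟩ | ⟨t, ⟨-, hbd, -⟩, heq⟩
    · have h := hbd ((2*k+3 : ℕ), Col.aa) (by simp)
      revert h
      show ¬(4*(2*k+3)-6 ≤ 4*(2*k+2)-3)
      omega
    · injection heq with h1 h2
      subst h2
      have h := hbd ((2*k : ℕ), Col.b) (by simp)
      revert h
      show ¬(4*(2*k)-1 ≤ 4*(2*k)-3)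
      omega
  rw [dct_eq_ncard, dct_eq_ncard, dct_eq_ncard, dct_eq_ncard, dset_decomp u v k n hk,
      Set.ncard_union_eq hd2 (finA.union (finB.image _)) (finC.image _),
      Set.ncard_union_eq hd1 finA (finB.image _),
      Set.ncard_image_of_injective _ hinj1, Set.ncard_image_of_injective _ hinj2]
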